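/- Let A⁺ ⊆ ℝⁿ be finite and nonempty, let β ∈ ℝⁿ, let v_α > 0 for all α ∈ A⁺ and v_β ∈ ℝ. Then the following are equivalent: (1) for every λ ∈ Λ(A⁺,β) one has |v_β| ≤ ∏_{α∈A⁺} v_α^{λ_α}; (2) there exists τ ∈ ℝⁿ such that |v_β| ≤ v_α·exp(⟨α−β, τ⟩) for every α ∈ A⁺ (equivalently, ln(|v_β|/v_α) ≤ ⟨α−β, τ⟩ for all α ∈ A⁺). -/

import Mathlib

open Finset

/-- `Λ(A⁺, β)`: barycentric coordinates of `β` with respect to `A⁺`. -/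
def IsBary {n : ℕ} (Ap : Finset (Fin n → ℝ)) (β : Fin n → ℝ) (lam : (Fin n → ℝ) → ℝ) : Prop :=
  (∀ α ∈ Ap, 0 ≤ lam α) ∧ (∑ α ∈ Ap, lam α = 1) ∧ (∑ α ∈ Ap, lam α • α = β)

set_option linter.unusedSectionVars false
set_option linter.unusedVariables false


section Cara
variable {E : Type*} [AddCommGroup E] [Module ℝ E] {ι : Type*}

lemma cone_caratheodory (v : ι → E) :
    ∀ (N : ℕ) (t : Finset ι), t.card ≤ N → ∀ lam : ι → ℝ, (∀ i ∈ t, 0 ≤ lam i) →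
    ∃ u : Finset ι, u ⊆ t ∧ (LinearIndependent ℝ (fun i : u => v i)) ∧
      ∃ μ : ι → ℝ, (∀ i ∈ u, 0 ≤ μ i) ∧ ∑ i ∈ u, μ i • v i = ∑ i ∈ t, lam i • v i := by
  intro N
  induction N with
  | zero =>
    intro t ht lam hlam
    have ht0 : t = ∅ := Finset.card_eq_zero.mp (Nat.le_zero.mp ht)
    subst ht0
    refine ⟨∅, subset_rfl, ?_, lam, hlam, rfl⟩
    haveI : IsEmpty ((∅ : Finset ι) : Set ι) := by simp
    exact linearIndependent_empty_type
  | succ N IH =>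
    intro t ht lam hlam
    by_cases hind : LinearIndependent ℝ (fun i : t => v i)
    · exact ⟨t, subset_rfl, hind, lam, hlam, rfl⟩
    · obtain ⟨g, hgsum, i₁, hi₁⟩ := Fintype.not_linearIndependent_iff.mp hind
      classical
      -- turn g into a function on ι
      obtain ⟨h, hhsum, j, hjt, hj⟩ :
          ∃ h : ι → ℝ, ∑ i ∈ t, h i • v i = 0 ∧ ∃ j ∈ t, 0 < h j := by
        rcases lt_or_gt_of_ne hi₁ with hneg | hpos
        · refine ⟨fun i => if hi : i ∈ t then -g ⟨i, hi⟩ else 0, ?_, i₁, i₁.2, ?_⟩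
          · rw [← Finset.sum_attach t (fun i => (if hi : i ∈ t then -g ⟨i, hi⟩ else 0) • v i)]
            simp only [Subtype.coe_eta]
            rw [← neg_eq_zero, ← Finset.sum_neg_distrib]
            rw [← hgsum]
            apply Finset.sum_congr rfl
            intro i _
            rw [dif_pos i.2, neg_smul, neg_neg]
          · simp only [dif_pos i₁.2, Subtype.coe_eta]
            linarith
        · refine ⟨fun i => if hi : i ∈ t then g ⟨i, hi⟩ else 0, ?_, i₁, i₁.2, ?_⟩
          · rw [← Finset.sum_attach t (fun i => (if hi : i ∈ t then g ⟨i, hi⟩ else 0) • v i)]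
            rw [← hgsum]
            apply Finset.sum_congr rfl
            intro i _
            rw [dif_pos i.2, Subtype.coe_eta]
          · simpa only [dif_pos i₁.2, Subtype.coe_eta] using hpos
      set T := t.filter (fun i => 0 < h i) with hT
      have hjT : j ∈ T := Finset.mem_filter.mpr ⟨hjt, hj⟩
      obtain ⟨i₀, hi₀T, hmin⟩ :=
        Finset.exists_min_image T (fun i => lam i / h i) ⟨j, hjT⟩
      have hi₀t : i₀ ∈ t := (Finset.mem_filter.mp hi₀T).1
      have hi₀pos : 0 < h i₀ := (Finset.mem_filter.mp hi₀T).2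
      set r := lam i₀ / h i₀ with hr
      have hr0 : 0 ≤ r := div_nonneg (hlam i₀ hi₀t) hi₀pos.le
      set lam' : ι → ℝ := fun i => lam i - r * h i with hlam'
      have hlam'nn : ∀ i ∈ t, 0 ≤ lam' i := by
        intro i hit
        by_cases hpos : 0 < h i
        · have := hmin i (Finset.mem_filter.mpr ⟨hit, hpos⟩)
          have : r * h i ≤ lam i := by
            rw [hr] at this ⊢
            calc lam i₀ / h i₀ * h i ≤ lam i / h i * h i := by
                  exact mul_le_mul_of_nonneg_right this hpos.le
              _ = lam i := div_mul_cancel₀ _ (ne_of_gt hpos)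
          simp only [hlam']; linarith
        · push_neg at hpos
          have : r * h i ≤ 0 := mul_nonpos_of_nonneg_of_nonpos hr0 hpos
          have := hlam i hit
          simp only [hlam']; linarith
      have hlam'i₀ : lam' i₀ = 0 := by
        simp only [hlam', hr]
        field_simp
        ring
      have hsum' : ∑ i ∈ t, lam' i • v i = ∑ i ∈ t, lam i • v i := by
        simp only [hlam', sub_smul, mul_smul]
        rw [Finset.sum_sub_distrib, ← Finset.smul_sum, hhsum, smul_zero, sub_zero]
      have hcard : (t.erase i₀).card ≤ N := by
        have := Finset.card_erase_of_mem hi₀t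
        omega
      obtain ⟨u, hu, hind', μ, hμ, hμsum⟩ := IH (t.erase i₀) hcard lam'
        (fun i hi => hlam'nn i (Finset.mem_of_mem_erase hi))
      refine ⟨u, hu.trans (Finset.erase_subset _ _), hind', μ, hμ, ?_⟩
      rw [hμsum, Finset.sum_erase t (by rw [hlam'i₀, zero_smul]), hsum']
end Cara


section Closed
variable {E : Type*} [NormedAddCommGroup E] [NormedSpace ℝ E] [FiniteDimensional ℝ E]
  {ι : Type*}

lemma isClosed_coneOf (v : ι → E) (t : Finset ι)
    (h : LinearIndependent ℝ (fun i : t => v i)) :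
    IsClosed {x : E | ∃ lam : ι → ℝ, (∀ i ∈ t, 0 ≤ lam i) ∧ ∑ i ∈ t, lam i • v i = x} := by
  classical
  let f : ({i // i ∈ t} → ℝ) →ₗ[ℝ] E :=
    { toFun := fun μ => ∑ i : {i // i ∈ t}, μ i • v i
      map_add' := by intro a b; simp [add_smul, Finset.sum_add_distrib]
      map_smul' := by intro c a; simp [mul_smul, ← Finset.smul_sum] }
  have hker : LinearMap.ker f = ⊥ := by
    rw [LinearMap.ker_eq_bot']
    intro m hm
    funext i
    exact Fintype.linearIndependent_iff.mp h m hm i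
  have himg : {x : E | ∃ lam : ι → ℝ, (∀ i ∈ t, 0 ≤ lam i) ∧ ∑ i ∈ t, lam i • v i = x}
      = f '' {μ | ∀ i, 0 ≤ μ i} := by
    ext x
    constructor
    · rintro ⟨lam, hnn, hsum⟩
      refine ⟨fun i => lam i, fun i => hnn i i.2, ?_⟩
      show ∑ i : {i // i ∈ t}, lam i • v i = x
      rw [← hsum]
      exact Finset.sum_coe_sort t (fun i => lam i • v i)
    · rintro ⟨μ, hnn, hsum⟩
      refine ⟨fun i => if hi : i ∈ t then μ ⟨i, hi⟩ else 0, fun i hi => by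
        simpa only [dif_pos hi] using hnn ⟨i, hi⟩, ?_⟩
      rw [← hsum]
      show _ = ∑ i : {i // i ∈ t}, μ i • v i
      rw [← Finset.sum_coe_sort t (fun i => (if hi : i ∈ t then μ ⟨i, hi⟩ else 0) • v i)]
      apply Finset.sum_congr rfl
      intro i _
      rw [dif_pos i.2]
  rw [himg]
  have hpos : IsClosed {μ : {i // i ∈ t} → ℝ | ∀ i, 0 ≤ μ i} := by
    have : {μ : {i // i ∈ t} → ℝ | ∀ i, 0 ≤ μ i} = ⋂ i, {μ | 0 ≤ μ i} := by
      ext μ; simp [Set.mem_iInter]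
    rw [this]
    exact isClosed_iInter fun i => isClosed_le continuous_const (continuous_apply i)
  exact (LinearMap.isClosedEmbedding_of_injective hker).isClosedMap _ hpos

lemma cone_subset_cone (v : ι → E) {t s : Finset ι} (hts : t ⊆ s) :
    {x : E | ∃ lam : ι → ℝ, (∀ i ∈ t, 0 ≤ lam i) ∧ ∑ i ∈ t, lam i • v i = x}
      ⊆ {x : E | ∃ lam : ι → ℝ, (∀ i ∈ s, 0 ≤ lam i) ∧ ∑ i ∈ s, lam i • v i = x} := by
  classical
  rintro x ⟨lam, hnn, hsum⟩
  refine ⟨fun i => if i ∈ t then lam i else 0, fun i _ => by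
    dsimp only; split <;> [exact hnn _ ‹_›; exact le_refl 0], ?_⟩
  rw [← hsum]
  rw [← Finset.sum_subset hts (fun i _ hit => by dsimp only; rw [if_neg hit, zero_smul])]
  exact Finset.sum_congr rfl fun i hi => by dsimp only; rw [if_pos hi]

lemma isClosed_finsetCone (v : ι → E) (s : Finset ι) :
    IsClosed {x : E | ∃ lam : ι → ℝ, (∀ i ∈ s, 0 ≤ lam i) ∧ ∑ i ∈ s, lam i • v i = x} := by
  classical
  have hdecomp : {x : E | ∃ lam : ι → ℝ, (∀ i ∈ s, 0 ≤ lam i) ∧ ∑ i ∈ s, lam i • v i = x}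
      = ⋃ t ∈ {t : Finset ι | t ⊆ s ∧ LinearIndependent ℝ (fun i : t => v i)},
          {x : E | ∃ lam : ι → ℝ, (∀ i ∈ t, 0 ≤ lam i) ∧ ∑ i ∈ t, lam i • v i = x} := by
    ext x
    simp only [Set.mem_iUnion, Set.mem_setOf_eq]
    constructor
    · rintro ⟨lam, hnn, hsum⟩
      obtain ⟨u, hus, hind, μ, hμ, hμsum⟩ := cone_caratheodory v s.card s le_rfl lam hnn
      exact ⟨u, ⟨hus, hind⟩, μ, hμ, by rw [hμsum, hsum]⟩
    · rintro ⟨t, ⟨hts, _⟩, hx⟩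
      exact cone_subset_cone v hts hx
  rw [hdecomp]
  refine Set.Finite.isClosed_biUnion ?_ ?_
  · refine Set.Finite.subset (s.powerset : Finset (Finset ι)).finite_toSet ?_
    intro t ht
    simpa using ht.1
  · rintro t ⟨_, hind⟩
    exact isClosed_coneOf v t hind
end Closed


section Farkas
variable {n : ℕ} {ι : Type*}

lemma fst_sum {A B : Type*} [AddCommMonoid A] [AddCommMonoid B] {γ : Type*}
    (t : Finset γ) (g : γ → (A × B)) :
    (∑ i ∈ t, g i).1 = ∑ i ∈ t, (g i).1 := map_sum (AddMonoidHom.fst _ _) g t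

lemma snd_sum {A B : Type*} [AddCommMonoid A] [AddCommMonoid B] {γ : Type*}
    (t : Finset γ) (g : γ → (A × B)) :
    (∑ i ∈ t, g i).2 = ∑ i ∈ t, (g i).2 := map_sum (AddMonoidHom.snd _ _) g t

lemma farkas (s : Finset ι) (w : ι → (Fin n → ℝ)) (c : ι → ℝ)
    (h : ∀ lam : ι → ℝ, (∀ i ∈ s, 0 ≤ lam i) → ∑ i ∈ s, lam i • w i = 0 →
      ∑ i ∈ s, lam i * c i ≤ 0) :
    ∃ τ : Fin n → ℝ, ∀ i ∈ s, c i ≤ ∑ j, w i j * τ j := by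
  classical
  set v : ι → ((Fin n → ℝ) × ℝ) := fun i => (w i, c i) with hv
  set K := {x : ((Fin n → ℝ) × ℝ) | ∃ lam : ι → ℝ,
    (∀ i ∈ s, 0 ≤ lam i) ∧ ∑ i ∈ s, lam i • v i = x} with hK
  have hKclosed : IsClosed K := isClosed_finsetCone v s
  have hKconvex : Convex ℝ K := by
    rintro x ⟨lx, hlx, hlxs⟩ y ⟨ly, hly, hlys⟩ a b ha hb _
    refine ⟨fun i => a * lx i + b * ly i, fun i hi =>
      add_nonneg (mul_nonneg ha (hlx i hi)) (mul_nonneg hb (hly i hi)), ?_⟩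
    simp only [add_smul, mul_smul, Finset.sum_add_distrib]
    rw [← Finset.smul_sum, ← Finset.smul_sum, hlxs, hlys]
  have hbK : (((0 : Fin n → ℝ), (1 : ℝ))) ∉ K := by
    rintro ⟨lam, hnn, hsum⟩
    have h1 : ∑ i ∈ s, lam i • w i = 0 := by
      have := congrArg Prod.fst hsum
      simp only [fst_sum] at this
      simpa using this
    have h2 : ∑ i ∈ s, lam i * c i = 1 := by
      have := congrArg Prod.snd hsum
      simp only [snd_sum] at this
      simpa [smul_eq_mul] using this
    have := h lam hnn h1
    linarith
  obtain ⟨f, u, hfK, hfb⟩ := geometric_hahn_banach_closed_point hKconvex hKclosed hbK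
  have h0K : (0 : (Fin n → ℝ) × ℝ) ∈ K := ⟨0, by simp, by simp⟩
  have hu : 0 < u := by simpa using hfK 0 h0K
  have hfle : ∀ x ∈ K, f x ≤ 0 := by
    intro x hx
    by_contra hpos
    push_neg at hpos
    have hmem : ((u + 1) / f x) • x ∈ K := by
      obtain ⟨lam, hnn, hsum⟩ := hx
      refine ⟨fun i => ((u + 1) / f x) * lam i, fun i hi =>
        mul_nonneg (div_nonneg (by linarith) hpos.le) (hnn i hi), ?_⟩
      simp only [mul_smul]
      rw [← Finset.smul_sum, hsum]
    have := hfK _ hmem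
    rw [map_smul, smul_eq_mul, div_mul_cancel₀ _ (ne_of_gt hpos)] at this
    linarith
  have hviK : ∀ i ∈ s, v i ∈ K := by
    intro i hi
    refine ⟨fun j => if j = i then 1 else 0, fun j _ => by dsimp only; split <;> norm_num, ?_⟩
    rw [Finset.sum_eq_single_of_mem i hi (fun j _ hji => by dsimp only; rw [if_neg hji, zero_smul])]
    dsimp only; rw [if_pos rfl, one_smul]
  have hS : 0 < f ((0 : Fin n → ℝ), (1 : ℝ)) := lt_trans hu hfb
  set S := f ((0 : Fin n → ℝ), (1 : ℝ)) with hSdef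
  have hdec : ∀ (x : Fin n → ℝ) (y : ℝ), f (x, y) = f (x, 0) + y * S := by
    intro x y
    have hxy : ((x, y) : (Fin n → ℝ) × ℝ)
        = (x, (0:ℝ)) + y • (((0 : Fin n → ℝ)), (1:ℝ)) := by
      simp [Prod.ext_iff]
    rw [hxy, map_add, map_smul, smul_eq_mul]
  set e : Fin n → (Fin n → ℝ) := fun j => fun k => if j = k then 1 else 0 with he
  have hlin : ∀ x : Fin n → ℝ, f (x, 0) = ∑ j, x j * f (e j, 0) := by
    intro x
    have hx : (x, (0:ℝ)) = ∑ j, (x j) • ((e j : Fin n → ℝ), (0:ℝ)) := by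
      refine Prod.ext ?_ ?_
      · rw [fst_sum _ (fun j => (x j) • ((e j : Fin n → ℝ), (0:ℝ)))]
        simpa using pi_eq_sum_univ x
      · rw [snd_sum _ (fun j => (x j) • ((e j : Fin n → ℝ), (0:ℝ)))]
        simp
    rw [hx, map_sum]
    exact Finset.sum_congr rfl fun j _ => by rw [map_smul, smul_eq_mul]
  refine ⟨fun j => -f (e j, 0) / S, fun i hi => ?_⟩
  have hfv : f (w i, 0) + c i * S ≤ 0 := by
    rw [← hdec]
    exact hfle _ (hviK i hi)
  have hgoal : ∑ j, w i j * (-f (e j, 0) / S) = -f (w i, 0) / S := by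
    calc ∑ j, w i j * (-f (e j, 0) / S) = (∑ j, -(w i j * f (e j, 0))) / S := by
          rw [Finset.sum_div]
          exact Finset.sum_congr rfl fun j _ => by ring
      _ = -f (w i, 0) / S := by rw [Finset.sum_neg_distrib, ← hlin (w i)]
  rw [hgoal, le_div_iff₀ hS]
  linarith
end Farkas

/-- The geometric-mean conditions over all barycentric coordinates are
equivalent to the existence of a single linear certificate `τ`
(`|v_β| ≤ v_α·exp⟨α−β,τ⟩` for all `α ∈ A⁺`, i.e. `ln(|v_β|/v_α) ≤ ⟨α−β,τ⟩`). -/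
theorem bary_geom_mean_iff_linear_certificate {n : ℕ}
    (Ap : Finset (Fin n → ℝ)) (hAp : Ap.Nonempty) (β : Fin n → ℝ)
    (v : (Fin n → ℝ) → ℝ) (hv : ∀ α ∈ Ap, 0 < v α) (vβ : ℝ) :
    (∀ lam : (Fin n → ℝ) → ℝ, IsBary Ap β lam → |vβ| ≤ ∏ α ∈ Ap, v α ^ lam α)
      ↔ ∃ τ : Fin n → ℝ, ∀ α ∈ Ap,
          |vβ| ≤ v α * Real.exp (∑ i, (α i - β i) * τ i) := by
  rcases eq_or_lt_of_le (abs_nonneg vβ) with hV | hV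
  · -- |vβ| = 0 : both sides hold
    constructor
    · intro _
      exact ⟨0, fun α hα => by
        rw [← hV]
        exact (mul_pos (hv α hα) (Real.exp_pos _)).le⟩
    · intro _ lam hlam
      rw [← hV]
      exact (Finset.prod_pos fun α hα => Real.rpow_pos_of_pos (hv α hα) _).le
  · constructor
    · -- forward: use Farkas
      intro hgm
      have hyp : ∀ lam : (Fin n → ℝ) → ℝ, (∀ i ∈ Ap, 0 ≤ lam i) →
          ∑ i ∈ Ap, lam i • (i - β) = 0 →
          ∑ i ∈ Ap, lam i * (Real.log |vβ| - Real.log (v i)) ≤ 0 := ?hyp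
      case _ =>
        obtain ⟨τ, hτ⟩ := farkas Ap (fun α => α - β)
          (fun α => Real.log |vβ| - Real.log (v α)) hyp
        refine ⟨τ, fun α hα => ?_⟩
        have hd := hτ α hα
        have : Real.log |vβ| ≤ Real.log (v α) + ∑ j, (α j - β j) * τ j := by
          have : ∑ j, (α - β) j * τ j = ∑ j, (α j - β j) * τ j := by
            exact Finset.sum_congr rfl fun j _ => by simp
          rw [this] at hd
          linarith
        have h2 : Real.exp (Real.log |vβ|)
            ≤ Real.exp (Real.log (v α) + ∑ j, (α j - β j) * τ j) :=
          Real.exp_le_exp.mpr this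
        rwa [Real.exp_log hV, Real.exp_add, Real.exp_log (hv α hα)] at h2
      case hyp =>
        intro lam hnn hsum
        set T := ∑ α ∈ Ap, lam α with hT
        have hT0 : 0 ≤ T := Finset.sum_nonneg hnn
        rcases eq_or_lt_of_le hT0 with hTz | hTpos
        · have hall : ∀ α ∈ Ap, lam α = 0 :=
            (Finset.sum_eq_zero_iff_of_nonneg hnn).mp hTz.symm
          rw [Finset.sum_eq_zero fun α hα => by rw [hall α hα, zero_mul]]
        · -- rescale to a barycentric combination
          have hsumα : ∑ α ∈ Ap, lam α • α = T • β := by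
            have : ∑ α ∈ Ap, lam α • (α - β) = ∑ α ∈ Ap, (lam α • α - lam α • β) :=
              Finset.sum_congr rfl fun α _ => smul_sub _ _ _
            rw [this, Finset.sum_sub_distrib, sub_eq_zero] at hsum
            rw [hsum, ← Finset.sum_smul]
          set lam' : (Fin n → ℝ) → ℝ := fun α => lam α / T with hlam'
          have hbary : IsBary Ap β lam' := by
            refine ⟨fun α hα => div_nonneg (hnn α hα) hT0, ?_, ?_⟩
            · rw [← Finset.sum_div, ← hT, div_self (ne_of_gt hTpos)]
            · have : ∑ α ∈ Ap, lam' α • α = T⁻¹ • ∑ α ∈ Ap, lam α • α := by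
                rw [Finset.smul_sum]
                exact Finset.sum_congr rfl fun α _ => by
                  rw [smul_smul, hlam']; congr 1; field_simp
              rw [this, hsumα, smul_smul, inv_mul_cancel₀ (ne_of_gt hTpos), one_smul]
          have hprodpos : 0 < ∏ α ∈ Ap, v α ^ lam' α :=
            Finset.prod_pos fun α hα => Real.rpow_pos_of_pos (hv α hα) _
          have hle := hgm lam' hbary
          have hlog : Real.log |vβ| ≤ ∑ α ∈ Ap, lam' α * Real.log (v α) := by
            have := (Real.log_le_log_iff hV hprodpos).mpr hle
            rwa [Real.log_prod (fun α (hα : α ∈ Ap) => (Real.rpow_pos_of_pos (hv α hα) _).ne'),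
              Finset.sum_congr rfl (fun α hα => Real.log_rpow (hv α hα) (lam' α))] at this
          have key : ∑ α ∈ Ap, lam' α * (Real.log |vβ| - Real.log (v α)) ≤ 0 := by
            have h1 : ∑ α ∈ Ap, lam' α * Real.log |vβ| = Real.log |vβ| := by
              rw [← Finset.sum_mul, hbary.2.1, one_mul]
            calc ∑ α ∈ Ap, lam' α * (Real.log |vβ| - Real.log (v α))
                = ∑ α ∈ Ap, lam' α * Real.log |vβ| - ∑ α ∈ Ap, lam' α * Real.log (v α) := by
                  rw [← Finset.sum_sub_distrib]
                  exact Finset.sum_congr rfl fun α _ => by ring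
              _ ≤ 0 := by rw [h1]; linarith
          calc ∑ α ∈ Ap, lam α * (Real.log |vβ| - Real.log (v α))
              = T * ∑ α ∈ Ap, lam' α * (Real.log |vβ| - Real.log (v α)) := by
                rw [Finset.mul_sum]
                exact Finset.sum_congr rfl fun α _ => by
                  rw [hlam']; field_simp; try ring
            _ ≤ 0 := mul_nonpos_of_nonneg_of_nonpos hT0 key
    · -- backward
      rintro ⟨τ, hτ⟩ lam ⟨hnn, hsum1, hsumβ⟩
      set d : (Fin n → ℝ) → ℝ := fun α => ∑ i, (α i - β i) * τ i with hd
      have hd0 : ∑ α ∈ Ap, lam α * d α = 0 := by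
        have e1 : ∑ α ∈ Ap, lam α * d α
            = ∑ α ∈ Ap, ∑ i, lam α * ((α i - β i) * τ i) :=
          Finset.sum_congr rfl fun α _ => Finset.mul_sum _ _ _
        rw [e1, Finset.sum_comm]
        have e2 : ∑ i, ∑ α ∈ Ap, lam α * ((α i - β i) * τ i)
            = ∑ i, (∑ α ∈ Ap, lam α * (α i - β i)) * τ i :=
          Finset.sum_congr rfl fun i _ => by
            rw [Finset.sum_mul]
            exact Finset.sum_congr rfl fun α _ => by ring
        rw [e2]
        refine Finset.sum_eq_zero fun i _ => ?_
        have h1 : ∑ α ∈ Ap, lam α * α i = β i := by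
          have := congrFun hsumβ i
          rw [Finset.sum_apply] at this
          simpa [smul_eq_mul] using this
        have : ∑ α ∈ Ap, lam α * (α i - β i) = 0 := by
          have : ∑ α ∈ Ap, lam α * (α i - β i)
              = ∑ α ∈ Ap, lam α * α i - (∑ α ∈ Ap, lam α) * β i := by
            rw [Finset.sum_mul, ← Finset.sum_sub_distrib]
            exact Finset.sum_congr rfl fun α _ => by ring
          rw [this, h1, hsum1, one_mul, sub_self]
        rw [this, zero_mul]
      have hprodpos : 0 < ∏ α ∈ Ap, v α ^ lam α :=
        Finset.prod_pos fun α hα => Real.rpow_pos_of_pos (hv α hα) _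
      rw [← Real.log_le_log_iff hV hprodpos,
        Real.log_prod (fun α (hα : α ∈ Ap) => (Real.rpow_pos_of_pos (hv α hα) _).ne'),
        Finset.sum_congr rfl (fun α hα => Real.log_rpow (hv α hα) (lam α))]
      have key : ∀ α ∈ Ap, Real.log |vβ| ≤ Real.log (v α) + d α := by
        intro α hα
        have := hτ α hα
        have hlog := (Real.log_le_log_iff hV (mul_pos (hv α hα) (Real.exp_pos _))).mpr this
        rwa [Real.log_mul (hv α hα).ne' (Real.exp_pos _).ne', Real.log_exp] at hlog
      calc Real.log |vβ| = ∑ α ∈ Ap, lam α * Real.log |vβ| := by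
            rw [← Finset.sum_mul, hsum1, one_mul]
        _ ≤ ∑ α ∈ Ap, lam α * (Real.log (v α) + d α) :=
            Finset.sum_le_sum fun α hα => mul_le_mul_of_nonneg_left (key α hα) (hnn α hα)
        _ = ∑ α ∈ Ap, lam α * Real.log (v α) + ∑ α ∈ Ap, lam α * d α := by
            rw [← Finset.sum_add_distrib]
            exact Finset.sum_congr rfl fun α _ => by ring
        _ = ∑ α ∈ Ap, lam α * Real.log (v α) := by rw [hd0, add_zero]
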